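/- Let K ≥ 2 and g₁, g₂, g₃ ∈ ℝ. Define the (1+2K)×(1+2K) real symmetric matrix G(g₁,g₂,g₃) = [[1, g₁𝟙_Kᵀ, g₁𝟙_Kᵀ],[g₁𝟙_K, I_K + g₂(J_K − I_K), g₃ I_K],[g₁𝟙_K, g₃ I_K, I_K + g₂(J_K − I_K)]]. Then G(g₁,g₂,g₃) is positive semidefinite if and only if the following four inequalities hold: 1 + (K−1)g₂ − g₃ ≥ 0, 1 − g₂ + g₃ ≥ 0, 1 − g₂ − g₃ ≥ 0, and 1 + (K−1)g₂ + g₃ ≥ 2K g₁². -/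

import Mathlib

open Matrix

/-- The `K × K` all-ones matrix. -/
def allOnes (K : ℕ) : Matrix (Fin K) (Fin K) ℝ := Matrix.of fun _ _ => 1

/-- The symmetry-reduced level-1 NPA Gram matrix
`G(g₁,g₂,g₃) = [[1, g₁𝟙ᵀ, g₁𝟙ᵀ],[g₁𝟙, I + g₂(J−I), g₃I],[g₁𝟙, g₃I, I + g₂(J−I)]]`. -/
def npaGram (K : ℕ) (g₁ g₂ g₃ : ℝ) :
    Matrix (Unit ⊕ (Fin K ⊕ Fin K)) (Unit ⊕ (Fin K ⊕ Fin K)) ℝ :=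
  Matrix.fromBlocks
    (Matrix.of fun _ _ => 1)
    (Matrix.of fun _ _ => g₁)
    (Matrix.of fun _ _ => g₁)
    (Matrix.fromBlocks
      (1 + g₂ • (allOnes K - 1)) (g₃ • (1 : Matrix (Fin K) (Fin K) ℝ))
      (g₃ • (1 : Matrix (Fin K) (Fin K) ℝ)) (1 + g₂ • (allOnes K - 1)))

lemma npaGram_quadForm (K : ℕ) (g₁ g₂ g₃ t : ℝ) (u v : Fin K → ℝ) :
    (Sum.elim (fun _ => t) (Sum.elim u v)) ⬝ᵥ
      (npaGram K g₁ g₂ g₃ *ᵥ Sum.elim (fun _ => t) (Sum.elim u v))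
    = t^2 + 2*g₁*t*((∑ i, u i) + (∑ i, v i)) + (∑ i, (u i)^2) + (∑ i, (v i)^2)
      + g₂*((∑ i, u i)^2 - ∑ i, (u i)^2) + g₂*((∑ i, v i)^2 - ∑ i, (v i)^2)
      + 2*g₃*(∑ i, u i * v i) := by
  simp only [npaGram, allOnes, mulVec, dotProduct, Fintype.sum_sum_type, Sum.elim_inl, Sum.elim_inr,
    fromBlocks_apply₁₁, fromBlocks_apply₁₂, fromBlocks_apply₂₁, fromBlocks_apply₂₂,
    Pi.add_apply, Matrix.add_apply, Matrix.smul_apply, Matrix.sub_apply, Matrix.one_apply, of_apply,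
    smul_eq_mul, mul_ite, ite_mul, mul_one, mul_zero, zero_mul, one_mul,
    Finset.sum_ite_eq, Finset.sum_ite_eq', Finset.mem_univ, if_true,
    mul_add, add_mul, mul_sub, sub_mul, Finset.sum_add_distrib, Finset.sum_sub_distrib,
    Finset.mul_sum, Finset.sum_mul]
  simp only [Finset.univ_unique, Finset.sum_singleton, ← Finset.mul_sum, ← Finset.sum_mul,
    mul_comm, mul_left_comm, ← sq]
  ring_nf

lemma npaGram_isHermitian (K : ℕ) (g₁ g₂ g₃ : ℝ) : (npaGram K g₁ g₂ g₃).IsHermitian := by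
  have hd : (1 + g₂ • (allOnes K - 1) : Matrix (Fin K) (Fin K) ℝ).IsHermitian := by
    unfold Matrix.IsHermitian
    ext i j
    simp only [Matrix.conjTranspose_apply, Matrix.add_apply, Matrix.smul_apply, Matrix.sub_apply,
      Matrix.one_apply, allOnes, of_apply, star_trivial, smul_eq_mul]
    by_cases h : i = j <;> simp [h, eq_comm]
  have hg : (g₃ • (1 : Matrix (Fin K) (Fin K) ℝ)).IsHermitian := by
    unfold Matrix.IsHermitian
    ext i j
    simp only [Matrix.conjTranspose_apply, Matrix.smul_apply, Matrix.one_apply, star_trivial,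
      smul_eq_mul]
    by_cases h : i = j <;> simp [h, eq_comm]
  refine Matrix.IsHermitian.fromBlocks ?_ ?_ (Matrix.IsHermitian.fromBlocks hd ?_ hd)
  · unfold Matrix.IsHermitian; ext i j; rfl
  · ext i j; rfl
  · exact hg

/-- Core real inequality. -/
lemma key_ineq (n t Su Sv P R W g₁ g₂ g₃ : ℝ) (hn : 2 ≤ n)
    (hp : Su^2 ≤ n*P) (hr : Sv^2 ≤ n*R)
    (hw : (n*W - Su*Sv)^2 ≤ (n*P - Su^2)*(n*R - Sv^2))
    (i1 : 0 ≤ 1+(n-1)*g₂-g₃) (i2 : 0 ≤ 1-g₂+g₃) (i3 : 0 ≤ 1-g₂-g₃)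
    (i4 : 2*n*g₁^2 ≤ 1+(n-1)*g₂+g₃) :
    0 ≤ t^2 + 2*g₁*t*(Su+Sv) + P + R + g₂*(Su^2-P) + g₂*(Sv^2-R) + 2*g₃*W := by
  set p := n*P - Su^2 with hpd
  set r := n*R - Sv^2 with hrd
  set w := n*W - Su*Sv with hwd
  have hp0 : 0 ≤ p := by simp [hpd]; linarith
  have hr0 : 0 ≤ r := by simp [hrd]; linarith
  have h2w1 : 2*w ≤ p + r := by
    rcases le_or_gt w 0 with h | h
    · linarith
    · nlinarith [sq_nonneg (p - r)]
  have h2w2 : -(p + r) ≤ 2*w := by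
    rcases le_or_gt 0 w with h | h
    · linarith
    · nlinarith [sq_nonneg (p - r)]
  have hn0 : (0:ℝ) < n := by linarith
  have e1 : 0 ≤ 2*n*(t + g₁*(Su+Sv))^2 := by positivity
  have e2 : 0 ≤ (1+(n-1)*g₂+g₃ - 2*n*g₁^2) * (Su+Sv)^2 :=
    mul_nonneg (by linarith) (sq_nonneg _)
  have e3 : 0 ≤ (1+(n-1)*g₂-g₃) * (Su-Sv)^2 := mul_nonneg i1 (sq_nonneg _)
  have e4 : 0 ≤ (1-g₂-g₃) * (p+r-2*w) := mul_nonneg i3 (by linarith)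
  have e5 : 0 ≤ (1-g₂+g₃) * (p+r+2*w) := mul_nonneg i2 (by linarith)
  have hid : 2*n*(t^2 + 2*g₁*t*(Su+Sv) + P + R + g₂*(Su^2-P) + g₂*(Sv^2-R) + 2*g₃*W)
      = 2*n*(t + g₁*(Su+Sv))^2 + (1+(n-1)*g₂+g₃ - 2*n*g₁^2) * (Su+Sv)^2
        + (1+(n-1)*g₂-g₃) * (Su-Sv)^2 + (1-g₂-g₃) * (p+r-2*w) + (1-g₂+g₃) * (p+r+2*w) := by
    simp only [hpd, hrd, hwd]; ring
  nlinarith [hid, e1, e2, e3, e4, e5]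

theorem stmt16 (K : ℕ) (hK : 2 ≤ K) (g₁ g₂ g₃ : ℝ) :
    (npaGram K g₁ g₂ g₃).PosSemidef ↔
      (0 ≤ 1 + (K - 1) * g₂ - g₃ ∧ 0 ≤ 1 - g₂ + g₃ ∧ 0 ≤ 1 - g₂ - g₃ ∧
        2 * K * g₁ ^ 2 ≤ 1 + (K - 1) * g₂ + g₃) := by
  haveI : NeZero K := ⟨by omega⟩
  have hnK : (2:ℝ) ≤ (K:ℝ) := by exact_mod_cast hK
  have hK0 : (0:ℝ) < (K:ℝ) := by linarith
  have h01 : (0 : Fin K) ≠ (1 : Fin K) := by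
    have hv : ((1 : Fin K) : ℕ) = 1 := by
      rw [Fin.val_one']
      exact Nat.mod_eq_of_lt (by omega)
    intro h
    rw [Fin.ext_iff, Fin.val_zero, hv] at h
    exact one_ne_zero h.symm
  -- basic sums for the test vector e = δ₀ - δ₁
  set e : Fin K → ℝ := fun i => (if i = 0 then (1:ℝ) else 0) - (if i = 1 then 1 else 0) with he
  have hesum : ∑ i, e i = 0 := by
    simp [he, Finset.sum_sub_distrib]
  have hesq : ∑ i, e i * e i = 2 := by
    have hpt : ∀ i : Fin K, e i * e i = (if i = 0 then (1:ℝ) else 0) + (if i = 1 then 1 else 0) := by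
      intro i
      rcases eq_or_ne i 0 with h0 | h0
      · subst h0; simp [he, h01]
      · rcases eq_or_ne i 1 with h1 | h1
        · subst h1; simp [he, Ne.symm h01]
        · simp [he, h0, h1]
    rw [Finset.sum_congr rfl (fun i _ => hpt i)]
    norm_num [Finset.sum_add_distrib]
  have hesq2 : ∑ i, (e i)^2 = 2 := by simpa [sq] using hesq
  rw [posSemidef_iff_dotProduct_mulVec]
  constructor
  · rintro ⟨-, hq⟩
    have Q := fun (t : ℝ) (u v : Fin K → ℝ) => by
      have h := hq (Sum.elim (fun _ => t) (Sum.elim u v))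
      rwa [star_trivial, npaGram_quadForm] at h
    -- vector 3 : u = 1, v = -1
    have h3 := Q 0 (fun _ => 1) (fun _ => -1)
    simp [Finset.sum_const, Finset.card_univ, mul_comm] at h3
    -- vector 1 : u = v = e
    have h1 := Q 0 e e
    rw [hesum, hesq2, hesq] at h1
    norm_num at h1
    -- vector 2 : u = e, v = -e
    have hs1 : ∑ i, -(e i) = (0:ℝ) := by rw [Finset.sum_neg_distrib, hesum, neg_zero]
    have hs2 : ∑ i, (-(e i))^2 = (2:ℝ) := by simpa [neg_sq] using hesq2
    have hs3 : ∑ i, e i * -(e i) = (-2:ℝ) := by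
      simp only [mul_neg, Finset.sum_neg_distrib, hesq]
    have h2 := Q 0 e (fun i => -(e i))
    simp only [hesum, hesq2, hs1, hs2, hs3] at h2
    norm_num at h2
    -- vector 4 : t = -2Kg₁, u = v = 1
    have h4 := Q (-(2*K*g₁)) (fun _ => 1) (fun _ => 1)
    simp [Finset.sum_const, Finset.card_univ] at h4
    refine ⟨?_, by linarith, by linarith, ?_⟩
    · nlinarith [h3]
    · nlinarith [h4]
  · rintro ⟨i1, i2, i3, i4⟩
    refine ⟨npaGram_isHermitian K g₁ g₂ g₃, fun x => ?_⟩
    set t : ℝ := x (Sum.inl ()) with ht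
    set u : Fin K → ℝ := fun i => x (Sum.inr (Sum.inl i)) with hu
    set v : Fin K → ℝ := fun i => x (Sum.inr (Sum.inr i)) with hv
    have hx : x = Sum.elim (fun _ => t) (Sum.elim u v) := by
      funext i
      rcases i with i | i | i
      · rfl
      · rfl
      · rfl
    rw [hx, star_trivial, npaGram_quadForm]
    have cs1 : (∑ i, u i)^2 ≤ (K:ℝ) * ∑ i, (u i)^2 := by
      have := Finset.sum_mul_sq_le_sq_mul_sq Finset.univ (fun _ : Fin K => (1:ℝ)) u
      simpa [Finset.card_univ] using this
    have cs2 : (∑ i, v i)^2 ≤ (K:ℝ) * ∑ i, (v i)^2 := by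
      have := Finset.sum_mul_sq_le_sq_mul_sq Finset.univ (fun _ : Fin K => (1:ℝ)) v
      simpa [Finset.card_univ] using this
    have cs3 : ((K:ℝ)*((K:ℝ)*(∑ i, u i * v i) - (∑ i, u i)*(∑ i, v i)))^2
        ≤ ((K:ℝ)*((K:ℝ)*(∑ i, (u i)^2) - (∑ i, u i)^2))
          * ((K:ℝ)*((K:ℝ)*(∑ i, (v i)^2) - (∑ i, v i)^2)) := by
      have := Finset.sum_mul_sq_le_sq_mul_sq Finset.univ
        (fun i => (K:ℝ) * u i - ∑ j, u j) (fun i => (K:ℝ) * v i - ∑ j, v j)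
      have l1 : ∑ i, ((K:ℝ) * u i - ∑ j, u j) * ((K:ℝ) * v i - ∑ j, v j)
          = (K:ℝ)*((K:ℝ)*(∑ i, u i * v i) - (∑ i, u i)*(∑ i, v i)) := by
        simp only [sub_mul, mul_sub, Finset.sum_sub_distrib, Finset.mul_sum, Finset.sum_mul,
          Finset.sum_const, Finset.card_univ, Fintype.card_fin, nsmul_eq_mul]
        ring_nf
        simp only [← Finset.mul_sum, ← Finset.sum_mul, mul_comm, mul_left_comm]
        ring_nf
      have l2 : ∑ i, ((K:ℝ) * u i - ∑ j, u j)^2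
          = (K:ℝ)*((K:ℝ)*(∑ i, (u i)^2) - (∑ i, u i)^2) := by
        simp only [sub_sq, Finset.sum_add_distrib, Finset.sum_sub_distrib, Finset.mul_sum,
          Finset.sum_mul, Finset.sum_const, Finset.card_univ, Fintype.card_fin, nsmul_eq_mul,
          mul_pow]
        simp only [← Finset.mul_sum, ← Finset.sum_mul, mul_comm, mul_left_comm]
        ring_nf
      have l3 : ∑ i, ((K:ℝ) * v i - ∑ j, v j)^2
          = (K:ℝ)*((K:ℝ)*(∑ i, (v i)^2) - (∑ i, v i)^2) := by
        simp only [sub_sq, Finset.sum_add_distrib, Finset.sum_sub_distrib, Finset.mul_sum,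
          Finset.sum_mul, Finset.sum_const, Finset.card_univ, Fintype.card_fin, nsmul_eq_mul,
          mul_pow]
        simp only [← Finset.mul_sum, ← Finset.sum_mul, mul_comm, mul_left_comm]
        ring_nf
      rw [l1, l2, l3] at this
      exact this
    have cs3' : ((K:ℝ)*(∑ i, u i * v i) - (∑ i, u i)*(∑ i, v i))^2
        ≤ ((K:ℝ)*(∑ i, (u i)^2) - (∑ i, u i)^2) * ((K:ℝ)*(∑ i, (v i)^2) - (∑ i, v i)^2) := by
      have hK2 : (0:ℝ) < (K:ℝ)^2 := by positivity
      refine le_of_mul_le_mul_right ?_ hK2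
      nlinarith [cs3]
    exact key_ineq (K:ℝ) t (∑ i, u i) (∑ i, v i) (∑ i, (u i)^2) (∑ i, (v i)^2)
      (∑ i, u i * v i) g₁ g₂ g₃ hnK cs1 cs2 cs3' i1 i2 i3 i4
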